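/- Let n = 3. In R = ℂ[z₁,z₂,z₃,w₁,w₂,w₃], set S := z₁w₁ + z₂w₂ + z₃w₃, let e₁, e₂ be the elementary symmetric polynomials in z₁,z₂,z₃ and ē₁, ē₂ those in w₁,w₂,w₃, and let Ω be the 3×3 matrix with rows (3, e₁, ē₁), (e₁, e₁²−2e₂, S), (ē₁, S, ē₁²−2ē₂). Then 16·ν₂² + det Ω = 0 in R. -/
import Mathlib


open MvPolynomial Finset Matrix

noncomputable section

def Zv (n : ℕ) (j : Fin n) : MvPolynomial (Fin n ⊕ Fin n) ℂ := X (Sum.inl j)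

def Wv (n : ℕ) (j : Fin n) : MvPolynomial (Fin n ⊕ Fin n) ℂ := X (Sum.inr j)

/-- The second normalized harmonic moment `ν₂`. -/
def nu2 (n : ℕ) [NeZero n] : MvPolynomial (Fin n ⊕ Fin n) ℂ :=
  C (Complex.I / 4) *
    ∑ j : Fin n, (Wv n j - Wv n (j + 1)) * (Zv n j + Zv n (j + 1))

/-- `S = z₁w₁ + z₂w₂ + z₃w₃`. -/
def Spoly : MvPolynomial (Fin 3 ⊕ Fin 3) ℂ := ∑ j : Fin 3, Zv 3 j * Wv 3 j

/-- `e_k(z₁,z₂,z₃)` inside `R`. -/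
def eZ (k : ℕ) : MvPolynomial (Fin 3 ⊕ Fin 3) ℂ :=
  MvPolynomial.rename Sum.inl (MvPolynomial.esymm (Fin 3) ℂ k)

/-- `ē_k(w₁,w₂,w₃)` inside `R`. -/
def eW (k : ℕ) : MvPolynomial (Fin 3 ⊕ Fin 3) ℂ :=
  MvPolynomial.rename Sum.inr (MvPolynomial.esymm (Fin 3) ℂ k)

/-- The matrix `Ω` with rows `(3, e₁, ē₁)`, `(e₁, e₁²−2e₂, S)`, `(ē₁, S, ē₁²−2ē₂)`. -/
def Omega : Matrix (Fin 3) (Fin 3) (MvPolynomial (Fin 3 ⊕ Fin 3) ℂ) :=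
  Matrix.of
    ![![(3 : MvPolynomial (Fin 3 ⊕ Fin 3) ℂ), eZ 1, eW 1],
      ![eZ 1, eZ 1 ^ 2 - 2 * eZ 2, Spoly],
      ![eW 1, Spoly, eW 1 ^ 2 - 2 * eW 2]]

lemma esymm1_fin3 : (MvPolynomial.esymm (Fin 3) ℂ 1) = X 0 + X 1 + X 2 := by
  rw [esymm_one, Fin.sum_univ_three]

lemma esymm2_fin3 : (MvPolynomial.esymm (Fin 3) ℂ 2) = X 0 * X 1 + X 0 * X 2 + X 1 * X 2 := by
  rw [esymm, show Finset.powersetCard 2 (Finset.univ : Finset (Fin 3)) = {{0,1},{0,2},{1,2}} from by decide]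
  rw [show ({{0,1},{0,2},{1,2}} : Finset (Finset (Fin 3))) = insert {0,1} (insert {0,2} {{1,2}}) from rfl]
  rw [Finset.sum_insert (by decide), Finset.sum_insert (by decide), Finset.sum_singleton]
  rw [show ({0,1} : Finset (Fin 3)) = insert 0 {1} from rfl, Finset.prod_insert (by decide), Finset.prod_singleton]
  rw [show ({0,2} : Finset (Fin 3)) = insert 0 {2} from rfl, Finset.prod_insert (by decide), Finset.prod_singleton]
  rw [show ({1,2} : Finset (Fin 3)) = insert 1 {2} from rfl, Finset.prod_insert (by decide), Finset.prod_singleton]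
  ring

/-- For triangles (`n = 3`): `16·ν₂² + det Ω = 0`. -/
theorem statement17 : 16 * nu2 3 ^ 2 + Omega.det = 0 := by
  have hI : (16 : MvPolynomial (Fin 3 ⊕ Fin 3) ℂ) * (C (Complex.I / 4))^2 = -1 := by
    rw [← C_pow, div_pow, Complex.I_sq,
      show ((16 : MvPolynomial (Fin 3 ⊕ Fin 3) ℂ)) = C 16 from (map_ofNat C 16).symm, ← C_mul]
    norm_num
  simp only [nu2, Omega, Spoly, eZ, eW, Matrix.det_fin_three, esymm1_fin3, esymm2_fin3,
    Fin.sum_univ_three, Matrix.of_apply, Matrix.cons_val', Matrix.cons_val_zero,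
    Matrix.cons_val_one, Matrix.head_cons, Matrix.empty_val', Matrix.cons_val_fin_one,
    Matrix.head_fin_const, Matrix.cons_val_two, Matrix.tail_cons, map_add, _root_.map_mul,
    rename_X, Zv, Wv,
    show (0:Fin 3)+1 = 1 from rfl, show (1:Fin 3)+1 = 2 from rfl, show (2:Fin 3)+1 = 0 from rfl]
  linear_combination ((X (Sum.inr 0) - X (Sum.inr 1)) * (X (Sum.inl 0) + X (Sum.inl 1)) +
    (X (Sum.inr 1) - X (Sum.inr 2)) * (X (Sum.inl 1) + X (Sum.inl 2)) +
    (X (Sum.inr 2) - X (Sum.inr 0)) * (X (Sum.inl 2) + X (Sum.inl 0)))^2 * hI
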